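/- Let G be a connected locally finite d-regular simple graph on vertex set V, with d ≥ 1. Then either G admits a Schreier structure, or the canonical double cover G ⊗ K₂ admits a Schreier structure on its vertex set V × Bool. (Equivalently: G is isomorphic to a Schreier graph, or G has a double cover which is isomorphic to a Schreier graph.) -/

import Mathlib

/-- The canonical double cover `G ⊗ K₂` of a simple graph `G`: vertices are `V × Bool`,
and `(v, b)` is adjacent to `(w, c)` iff `v` is adjacent to `w` in `G` and `b ≠ c`. -/
def doubleCover {V : Type*} (G : SimpleGraph V) : SimpleGraph (V × Bool) where
  Adj x y := G.Adj x.1 y.1 ∧ x.2 ≠ y.2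
  symm := ⟨fun _ _ h => ⟨G.adj_symm h.1, Ne.symm h.2⟩⟩
  loopless := ⟨fun _ h => h.2 rfl⟩

/-- A Schreier structure on a simple graph `G` with vertex set `V`: a group `Γ` acting
transitively on `V` (the action being given by the homomorphism `act : Γ →* Equiv.Perm V`),
together with a finite symmetric subset `S ⊆ Γ` with `1 ∉ S`, such that for every vertex `x`
the map `s ↦ s • x` is a bijection from `S` onto the neighborhood of `x` in `G`. -/
structure SchreierStructure {V : Type*} (G : SimpleGraph V) where
  Γ : Type*
  [grp : Group Γ]
  act : Γ →* Equiv.Perm V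
  S : Finset Γ
  symm : ∀ s ∈ S, s⁻¹ ∈ S
  one_not_mem : (1 : Γ) ∉ S
  transitive : ∀ x y : V, ∃ g : Γ, act g x = y
  bijOn : ∀ x : V, Set.BijOn (fun s : Γ => act s x) (S : Set Γ) (G.neighborSet x)

/-- Auxiliary sets for the pointwise Schröder–Bernstein theorem. -/
private def sbSet {α β : Type*} (f : α → β) (g : β → α) : ℕ → Set α
  | 0 => (Set.range g)ᶜ
  | n + 1 => g '' (f '' sbSet f g n)

/-- Schröder–Bernstein with the extra property that the bijection agrees pointwise with
`f` or with (a right inverse of) `g`. -/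
theorem sb_piecewise {α β : Type*} {f : α → β} {g : β → α}
    (hf : Function.Injective f) (hg : Function.Injective g) :
    ∃ h : α → β, Function.Bijective h ∧ ∀ a, h a = f a ∨ g (h a) = a := by
  classical
  set X : Set α := ⋃ n, sbSet f g n with hX
  have hmem : ∀ a, a ∉ X → a ∈ Set.range g := by
    intro a ha
    by_contra hb
    exact ha (Set.mem_iUnion.2 ⟨0, hb⟩)
  let h : α → β := fun a => if hx : a ∈ X then f a else (hmem a hx).choose
  have hgh : ∀ a, (hx : a ∉ X) → g (h a) = a := by
    intro a hx
    show g (dite _ _ _) = a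
    rw [dif_neg hx]
    exact (hmem a hx).choose_spec
  have hhx : ∀ a, a ∈ X → h a = f a := fun a hx => dif_pos hx
  have hstep : ∀ a ∈ X, g (f a) ∈ X := by
    intro a ha
    obtain ⟨n, hn⟩ := Set.mem_iUnion.1 ha
    exact Set.mem_iUnion.2 ⟨n + 1, ⟨f a, ⟨a, hn, rfl⟩, rfl⟩⟩
  refine ⟨h, ⟨?_, ?_⟩, fun a => ?_⟩
  · intro a₁ a₂ heq
    by_cases h1 : a₁ ∈ X <;> by_cases h2 : a₂ ∈ X
    · exact hf (by rwa [hhx a₁ h1, hhx a₂ h2] at heq)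
    · exfalso
      have hga : g (f a₁) = a₂ := by rw [← hhx a₁ h1, heq, hgh a₂ h2]
      exact h2 (hga ▸ hstep a₁ h1)
    · exfalso
      have hga : g (f a₂) = a₁ := by rw [← hhx a₂ h2, ← heq, hgh a₁ h1]
      exact h1 (hga ▸ hstep a₂ h2)
    · calc a₁ = g (h a₁) := (hgh a₁ h1).symm
        _ = g (h a₂) := by rw [heq]
        _ = a₂ := hgh a₂ h2
  · intro b
    by_cases hx : g b ∈ X
    · obtain ⟨n, hn⟩ := Set.mem_iUnion.1 hx
      cases n with
      | zero => exact absurd (Set.mem_range_self b) hn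
      | succ m =>
        obtain ⟨y, hy, hgy⟩ := hn
        obtain ⟨a, haS, rfl⟩ := hy
        have hb : f a = b := hg hgy
        exact ⟨a, by rw [hhx a (Set.mem_iUnion.2 ⟨m, haS⟩), hb]⟩
    · exact ⟨g b, hg (hgh (g b) hx)⟩
  · by_cases hx : a ∈ X
    · exact Or.inl (hhx a hx)
    · exact Or.inr (hgh a hx)

/-- Hall's theorem for `d`-regular bipartite-type set systems: there is an injective
choice function. -/
theorem hall_regular {V : Type*} [DecidableEq V] {d : ℕ} (hd : 1 ≤ d) (A B : V → Finset V)
    (hAB : ∀ v w, w ∈ A v ↔ v ∈ B w) (hA : ∀ v, (A v).card = d) (hB : ∀ v, (B v).card = d) :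
    ∃ f : V → V, Function.Injective f ∧ ∀ v, f v ∈ A v := by
  classical
  rw [← Finset.all_card_le_biUnion_card_iff_exists_injective]
  intro s
  have key : s.card * d ≤ (s.biUnion A).card * d := by
    apply Finset.card_mul_le_card_mul (fun v w => w ∈ A v)
    · intro a ha
      have hsub : A a ⊆ Finset.bipartiteAbove (fun v w => w ∈ A v) (s.biUnion A) a := by
        intro w hw
        rw [Finset.mem_bipartiteAbove]
        exact ⟨Finset.mem_biUnion.2 ⟨a, ha, hw⟩, hw⟩
      calc d = (A a).card := (hA a).symm
        _ ≤ _ := Finset.card_le_card hsub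
    · intro b _
      have hsub : Finset.bipartiteBelow (fun v w => w ∈ A v) s b ⊆ B b := by
        intro a ha
        rw [Finset.mem_bipartiteBelow] at ha
        exact (hAB a b).1 ha.2
      calc (Finset.bipartiteBelow (fun v w => w ∈ A v) s b).card
          ≤ (B b).card := Finset.card_le_card hsub
        _ = d := hB b
  exact Nat.le_of_mul_le_mul_right key hd

/-- A perfect matching for a `d`-regular bipartite-type set system. -/
theorem pm_regular {V : Type*} [DecidableEq V] {d : ℕ} (hd : 1 ≤ d) (A B : V → Finset V)
    (hAB : ∀ v w, w ∈ A v ↔ v ∈ B w) (hA : ∀ v, (A v).card = d) (hB : ∀ v, (B v).card = d) :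
    ∃ e : Equiv.Perm V, ∀ v, e v ∈ A v := by
  obtain ⟨f, hf, hfA⟩ := hall_regular hd A B hAB hA hB
  obtain ⟨g, hg, hgB⟩ := hall_regular hd B A (fun v w => (hAB w v).symm) hB hA
  obtain ⟨h, hbij, hprop⟩ := sb_piecewise hf hg
  refine ⟨Equiv.ofBijective h hbij, fun v => ?_⟩
  have hval : (Equiv.ofBijective h hbij) v = h v := rfl
  rw [hval]
  rcases hprop v with h1 | h2
  · rw [h1]; exact hfA v
  · have hB' := hgB (h v)
    rw [h2] at hB'
    exact (hAB v (h v)).2 hB'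

/-- Decomposition of a `d`-regular bipartite-type set system into `d` disjoint perfect
matchings (König's edge-colouring theorem, functional form). -/
theorem decomp_regular {V : Type*} [DecidableEq V] (d : ℕ) (A B : V → Finset V)
    (hAB : ∀ v w, w ∈ A v ↔ v ∈ B w) (hA : ∀ v, (A v).card = d) (hB : ∀ v, (B v).card = d) :
    ∃ σ : Fin d → Equiv.Perm V,
      (∀ v (i : Fin d), σ i v ∈ A v) ∧
      (∀ v (i j : Fin d), σ i v = σ j v → i = j) ∧
      (∀ v, ∀ w ∈ A v, ∃ i : Fin d, σ i v = w) ∧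
      (∀ v (i : Fin d), (σ i)⁻¹ v ∈ B v) ∧
      (∀ v (i j : Fin d), (σ i)⁻¹ v = (σ j)⁻¹ v → i = j) ∧
      (∀ v, ∀ w ∈ B v, ∃ i : Fin d, (σ i)⁻¹ v = w) := by
  induction d generalizing A B with
  | zero =>
    refine ⟨fun i => i.elim0, fun v i => i.elim0, fun v i => i.elim0,
      fun v w hw => ?_, fun v i => i.elim0, fun v i => i.elim0, fun v w hw => ?_⟩
    · exact absurd hw (by simp [Finset.card_eq_zero.1 (hA v)])
    · exact absurd hw (by simp [Finset.card_eq_zero.1 (hB v)])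
  | succ d ih =>
    obtain ⟨e, he⟩ := pm_regular (Nat.succ_le_succ d.zero_le) A B hAB hA hB
    have heB : ∀ v, e⁻¹ v ∈ B v := by
      intro v
      have h1 := he (e⁻¹ v)
      rw [Equiv.Perm.inv_def, Equiv.apply_symm_apply] at h1
      exact (hAB (e⁻¹ v) v).1 h1
    have hiff : ∀ v w, w = e v ↔ v = e⁻¹ w := by
      intro v w
      constructor
      · rintro rfl; exact (e.symm_apply_apply v).symm
      · rintro rfl; exact (e.apply_symm_apply w).symm
    set A' : V → Finset V := fun v => (A v).erase (e v) with hA'def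
    set B' : V → Finset V := fun v => (B v).erase (e⁻¹ v) with hB'def
    have hAB' : ∀ v w, w ∈ A' v ↔ v ∈ B' w := by
      intro v w
      simp only [hA'def, hB'def, Finset.mem_erase]
      rw [hAB v w]
      constructor
      · rintro ⟨hne, hw⟩; exact ⟨fun hh => hne ((hiff v w).2 hh), hw⟩
      · rintro ⟨hne, hw⟩; exact ⟨fun hh => hne ((hiff v w).1 hh), hw⟩
    have hA' : ∀ v, (A' v).card = d := by
      intro v
      show ((A v).erase (e v)).card = d
      rw [Finset.card_erase_of_mem (he v), hA]
      rfl
    have hB' : ∀ v, (B' v).card = d := by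
      intro v
      show ((B v).erase (e⁻¹ v)).card = d
      rw [Finset.card_erase_of_mem (heB v), hB]
      rfl
    obtain ⟨σ', H1, H2, H3, H4, H5, H6⟩ := ih A' B' hAB' hA' hB'
    have hmemA' : ∀ v (i : Fin d), σ' i v ∈ A v ∧ σ' i v ≠ e v := by
      intro v i
      have hh := H1 v i
      rw [hA'def] at hh
      rw [Finset.mem_erase] at hh
      exact ⟨hh.2, hh.1⟩
    have hmemB' : ∀ v (i : Fin d), (σ' i)⁻¹ v ∈ B v ∧ (σ' i)⁻¹ v ≠ e⁻¹ v := by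
      intro v i
      have hh := H4 v i
      rw [hB'def] at hh
      rw [Finset.mem_erase] at hh
      exact ⟨hh.2, hh.1⟩
    refine ⟨Fin.cons e σ', ?_, ?_, ?_, ?_, ?_, ?_⟩
    · intro v i
      induction i using Fin.cases with
      | zero => rw [Fin.cons_zero]; exact he v
      | succ i => rw [Fin.cons_succ]; exact (hmemA' v i).1
    · intro v i j hij
      induction i using Fin.cases with
      | zero =>
        induction j using Fin.cases with
        | zero => rfl
        | succ j =>
          rw [Fin.cons_zero, Fin.cons_succ] at hij
          exact absurd hij.symm (hmemA' v j).2
      | succ i =>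
        induction j using Fin.cases with
        | zero =>
          rw [Fin.cons_zero, Fin.cons_succ] at hij
          exact absurd hij (hmemA' v i).2
        | succ j =>
          rw [Fin.cons_succ, Fin.cons_succ] at hij
          exact congrArg Fin.succ (H2 v i j hij)
    · intro v w hw
      by_cases hwe : w = e v
      · exact ⟨0, by rw [Fin.cons_zero, hwe]⟩
      · have hw' : w ∈ A' v := by rw [hA'def]; rw [Finset.mem_erase]; exact ⟨hwe, hw⟩
        obtain ⟨i, hi⟩ := H3 v w hw'
        exact ⟨i.succ, by rw [Fin.cons_succ]; exact hi⟩
    · intro v i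
      induction i using Fin.cases with
      | zero => rw [Fin.cons_zero]; exact heB v
      | succ i => rw [Fin.cons_succ]; exact (hmemB' v i).1
    · intro v i j hij
      induction i using Fin.cases with
      | zero =>
        induction j using Fin.cases with
        | zero => rfl
        | succ j =>
          rw [Fin.cons_zero, Fin.cons_succ] at hij
          exact absurd hij.symm (hmemB' v j).2
      | succ i =>
        induction j using Fin.cases with
        | zero =>
          rw [Fin.cons_zero, Fin.cons_succ] at hij
          exact absurd hij (hmemB' v i).2
        | succ j =>
          rw [Fin.cons_succ, Fin.cons_succ] at hij
          exact congrArg Fin.succ (H5 v i j hij)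
    · intro v w hw
      by_cases hwe : w = e⁻¹ v
      · exact ⟨0, by rw [Fin.cons_zero, hwe]⟩
      · have hw' : w ∈ B' v := by rw [hB'def]; rw [Finset.mem_erase]; exact ⟨hwe, hw⟩
        obtain ⟨i, hi⟩ := H6 v w hw'
        exact ⟨i.succ, by rw [Fin.cons_succ]; exact hi⟩

/-- The fixed-point-free involution of `V × Bool` induced by a permutation `σ` of `V`:
`(v, false) ↦ (σ v, true)` and `(v, true) ↦ (σ⁻¹ v, false)`. -/
def tauPerm {V : Type*} (σ : Equiv.Perm V) : Equiv.Perm (V × Bool) where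
  toFun x := if x.2 then (σ.symm x.1, false) else (σ x.1, true)
  invFun x := if x.2 then (σ.symm x.1, false) else (σ x.1, true)
  left_inv := by rintro ⟨v, b⟩; cases b <;> simp
  right_inv := by rintro ⟨v, b⟩; cases b <;> simp

theorem tauPerm_inv {V : Type*} (σ : Equiv.Perm V) : (tauPerm σ)⁻¹ = tauPerm σ := by
  rw [Equiv.Perm.inv_def]
  rfl

theorem tauPerm_false {V : Type*} (σ : Equiv.Perm V) (v : V) :
    tauPerm σ (v, false) = (σ v, true) := rfl

theorem tauPerm_true {V : Type*} (σ : Equiv.Perm V) (v : V) :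
    tauPerm σ (v, true) = (σ.symm v, false) := rfl

/-- Conjugation by an equivalence, as a group isomorphism of permutation groups. -/
def permCongrMulEquiv {α β : Type*} (e : α ≃ β) : Equiv.Perm α ≃* Equiv.Perm β where
  toEquiv := e.permCongr
  map_mul' g₁ g₂ := by
    ext x
    simp [Equiv.permCongr_apply]

/-- Balls of radius `n` around a base vertex in a locally finite graph. -/
private def ballFinset {V : Type*} [DecidableEq V] (G : SimpleGraph V) [G.LocallyFinite]
    (v₀ : V) : ℕ → Finset V
  | 0 => {v₀}
  | n + 1 => ballFinset G v₀ n ∪ (ballFinset G v₀ n).biUnion (fun v => G.neighborFinset v)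

/-- A connected locally finite graph has countably many vertices. -/
theorem countable_of_connected_locallyFinite {V : Type*} (G : SimpleGraph V)
    [G.LocallyFinite] (hconn : G.Connected) : Countable V := by
  classical
  obtain ⟨v₀⟩ := hconn.nonempty
  have hstep : ∀ (n : ℕ) (v w : V), v ∈ ballFinset G v₀ n → G.Adj v w →
      w ∈ ballFinset G v₀ (n + 1) := by
    intro n v w hv hadj
    exact Finset.mem_union_right _
      (Finset.mem_biUnion.2 ⟨v, hv, (SimpleGraph.mem_neighborFinset _ _ _).2 hadj⟩)
  have hwalk : ∀ (v w : V) (p : G.Walk v w) (n : ℕ),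
      v ∈ ballFinset G v₀ n → w ∈ ballFinset G v₀ (n + p.length) := by
    intro v w p
    induction p with
    | nil => intro n hv; simpa using hv
    | @cons v x w h q ihq =>
      intro n hv
      have hx := ihq (n + 1) (hstep n _ _ hv h)
      have harith : n + (SimpleGraph.Walk.cons h q).length = n + 1 + q.length := by
        rw [SimpleGraph.Walk.length_cons]; omega
      rw [harith]
      exact hx
  have hcover : ∀ w : V, ∃ n, w ∈ ballFinset G v₀ n := by
    intro w
    obtain ⟨p⟩ := hconn.preconnected v₀ w
    refine ⟨p.length, ?_⟩
    have h0 : v₀ ∈ ballFinset G v₀ 0 := by simp [ballFinset]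
    simpa using hwalk v₀ w p 0 h0
  have huniv : (Set.univ : Set V).Countable := by
    have hsub : (Set.univ : Set V) ⊆ ⋃ n, (ballFinset G v₀ n : Set V) := by
      intro w _
      obtain ⟨n, hn⟩ := hcover w
      exact Set.mem_iUnion.2 ⟨n, hn⟩
    exact Set.Countable.mono hsub
      (Set.countable_iUnion fun n => (ballFinset G v₀ n).countable_toSet)
  exact Set.countable_univ_iff.1 huniv

/-- Every connected locally finite `d`-regular simple graph (`d ≥ 1`) either
admits a Schreier structure, or its canonical double cover does.  (Equivalently: `G` is
isomorphic to a Schreier graph, or `G` has a double cover isomorphic to a Schreier graph.) -/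
theorem schreier_or_doubleCover_schreier {V : Type*} (G : SimpleGraph V)
    [G.LocallyFinite] (d : ℕ) (hd : 1 ≤ d) (hconn : G.Connected)
    (hreg : G.IsRegularOfDegree d) :
    Nonempty (SchreierStructure G) ∨ Nonempty (SchreierStructure (doubleCover G)) := by
  classical
  right
  have hsymmN : ∀ v w : V, w ∈ G.neighborFinset v ↔ v ∈ G.neighborFinset w := by
    intro v w
    rw [SimpleGraph.mem_neighborFinset, SimpleGraph.mem_neighborFinset, G.adj_comm]
  obtain ⟨σ, H1, H2, H3, H4, H5, H6⟩ :=
    decomp_regular d (fun v => G.neighborFinset v) (fun v => G.neighborFinset v)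
      hsymmN (fun v => hreg v) (fun v => hreg v)
  obtain ⟨v₀⟩ := hconn.nonempty
  have hadj : ∀ v (i : Fin d), G.Adj v (σ i v) := by
    intro v i
    have hh := H1 v i
    rwa [SimpleGraph.mem_neighborFinset] at hh
  have hadj' : ∀ v (i : Fin d), G.Adj v ((σ i).symm v) := by
    intro v i
    have hh := H4 v i
    rw [SimpleGraph.mem_neighborFinset] at hh
    rwa [Equiv.Perm.inv_def] at hh
  -- a small (Type 0) model of the permutation group of `V × Bool`
  have hcount : Countable V := countable_of_connected_locallyFinite G hconn
  obtain ⟨fD, hfD⟩ := exists_injective_nat (V × Bool)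
  let eD : V × Bool ≃ Set.range fD := Equiv.ofInjective fD hfD
  refine ⟨{ Γ := ULift (Equiv.Perm (Set.range fD)),
            act := (MulEquiv.ulift.trans (permCongrMulEquiv eD.symm)).toMonoidHom,
            S := Finset.image (fun i : Fin d =>
              (MulEquiv.ulift.trans (permCongrMulEquiv eD.symm)).symm (tauPerm (σ i)))
              Finset.univ,
            symm := ?_, one_not_mem := ?_, transitive := ?_, bijOn := ?_ }⟩
  all_goals
    set Φ : ULift (Equiv.Perm (Set.range fD)) ≃* Equiv.Perm (V × Bool) :=
      MulEquiv.ulift.trans (permCongrMulEquiv eD.symm) with hΦ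
  · -- symm
    intro s hs
    obtain ⟨i, _, rfl⟩ := Finset.mem_image.1 hs
    have hinv : (Φ.symm (tauPerm (σ i)))⁻¹ = Φ.symm (tauPerm (σ i)) := by
      rw [← map_inv, tauPerm_inv]
    rw [hinv]
    exact hs
  · -- one_not_mem
    intro h1
    obtain ⟨i, _, hi⟩ := Finset.mem_image.1 h1
    have htau : tauPerm (σ i) = 1 := by
      have := congrArg Φ hi
      rwa [Φ.apply_symm_apply, map_one] at this
    have hcontra := congrArg (fun p : Equiv.Perm (V × Bool) => (p (v₀, false)).2) htau
    simp only [tauPerm_false, Equiv.Perm.one_apply] at hcontra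
    exact Bool.noConfusion hcontra
  · -- transitive
    intro x y
    refine ⟨Φ.symm (Equiv.swap x y), ?_⟩
    show Φ (Φ.symm (Equiv.swap x y)) x = y
    rw [Φ.apply_symm_apply]
    exact Equiv.swap_apply_left x y
  · -- bijOn
    have hact : ∀ i : Fin d, Φ (Φ.symm (tauPerm (σ i))) = tauPerm (σ i) :=
      fun i => Φ.apply_symm_apply _
    rintro ⟨v, b⟩
    cases b
    · refine ⟨?_, ?_, ?_⟩
      · -- MapsTo
        intro s hs
        obtain ⟨i, _, rfl⟩ := Finset.mem_image.1 hs
        show Φ (Φ.symm (tauPerm (σ i))) (v, false) ∈ (doubleCover G).neighborSet (v, false)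
        rw [hact, SimpleGraph.mem_neighborSet, tauPerm_false]
        exact ⟨hadj v i, by simp⟩
      · -- InjOn
        intro s₁ hs₁ s₂ hs₂ heq
        obtain ⟨i, _, rfl⟩ := Finset.mem_image.1 hs₁
        obtain ⟨j, _, rfl⟩ := Finset.mem_image.1 hs₂
        have heq' : tauPerm (σ i) (v, false) = tauPerm (σ j) (v, false) := by
          have h1 : Φ (Φ.symm (tauPerm (σ i))) (v, false)
              = Φ (Φ.symm (tauPerm (σ j))) (v, false) := heq
          rwa [hact, hact] at h1
        rw [tauPerm_false, tauPerm_false] at heq'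
        have hσ : σ i v = σ j v := congrArg Prod.fst heq'
        rw [H2 v i j hσ]
      · -- SurjOn
        rintro ⟨w, c⟩ hw
        rw [SimpleGraph.mem_neighborSet] at hw
        obtain ⟨hvw, hbc⟩ := hw
        have hc : c = true := by
          cases c
          · exact absurd rfl hbc
          · rfl
        subst hc
        have hwN : w ∈ G.neighborFinset v := (SimpleGraph.mem_neighborFinset _ _ _).2 hvw
        obtain ⟨i, hi⟩ := H3 v w hwN
        refine ⟨Φ.symm (tauPerm (σ i)), ?_, ?_⟩
        · exact Finset.mem_coe.2 (Finset.mem_image.2 ⟨i, Finset.mem_univ i, rfl⟩)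
        · show Φ (Φ.symm (tauPerm (σ i))) (v, false) = (w, true)
          rw [hact, tauPerm_false, hi]
    · refine ⟨?_, ?_, ?_⟩
      · intro s hs
        obtain ⟨i, _, rfl⟩ := Finset.mem_image.1 hs
        show Φ (Φ.symm (tauPerm (σ i))) (v, true) ∈ (doubleCover G).neighborSet (v, true)
        rw [hact, SimpleGraph.mem_neighborSet, tauPerm_true]
        exact ⟨hadj' v i, by simp⟩
      · intro s₁ hs₁ s₂ hs₂ heq
        obtain ⟨i, _, rfl⟩ := Finset.mem_image.1 hs₁
        obtain ⟨j, _, rfl⟩ := Finset.mem_image.1 hs₂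
        have heq' : tauPerm (σ i) (v, true) = tauPerm (σ j) (v, true) := by
          have h1 : Φ (Φ.symm (tauPerm (σ i))) (v, true)
              = Φ (Φ.symm (tauPerm (σ j))) (v, true) := heq
          rwa [hact, hact] at h1
        rw [tauPerm_true, tauPerm_true] at heq'
        have hσ : (σ i)⁻¹ v = (σ j)⁻¹ v := by
          rw [Equiv.Perm.inv_def, Equiv.Perm.inv_def]
          exact congrArg Prod.fst heq'
        rw [H5 v i j hσ]
      · rintro ⟨w, c⟩ hw
        rw [SimpleGraph.mem_neighborSet] at hw
        obtain ⟨hvw, hbc⟩ := hw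
        have hc : c = false := by
          cases c
          · rfl
          · exact absurd rfl hbc
        subst hc
        have hwN : w ∈ G.neighborFinset v := (SimpleGraph.mem_neighborFinset _ _ _).2 hvw
        obtain ⟨i, hi⟩ := H6 v w hwN
        refine ⟨Φ.symm (tauPerm (σ i)), ?_, ?_⟩
        · exact Finset.mem_coe.2 (Finset.mem_image.2 ⟨i, Finset.mem_univ i, rfl⟩)
        · show Φ (Φ.symm (tauPerm (σ i))) (v, true) = (w, false)
          rw [hact, tauPerm_true]
          rw [Equiv.Perm.inv_def] at hi
          rw [hi]
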